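/- Exactness of the Gauss–Hermite quadrature rule: for every n ≥ 1, the probabilists' Hermite polynomial He_n has exactly n distinct real roots x_1 < … < x_n, and for every real polynomial p of degree at most 2n − 1, ∫_{ℝ} p(x)·exp(−x²/2)/√(2π) dx = Σ_{i=1}^{n} w_i·p(x_i), where the quadrature weights are w_i := (n−1)! / (n·(He_{n−1}(x_i))²). -/

import Mathlib

open MeasureTheory Real Polynomial Filter

lemma tendsto_pg_atTop (p : ℝ[X]) {b : ℝ} (hb : 0 < b) :
    Tendsto (fun x => p.eval x * Real.exp (-b * x ^ 2)) atTop (nhds 0) := by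
  have h1 : Tendsto (fun x => p.eval x / Real.exp x) atTop (nhds 0) := p.tendsto_div_exp_atTop
  have h3 : Tendsto (fun x : ℝ => x - b * x ^ 2) atTop atBot := by
    have h4 : Tendsto (fun x : ℝ => x * (b * x - 1)) atTop atTop :=
      tendsto_id.atTop_mul_atTop₀ (tendsto_atTop_add_const_right _ _
        (tendsto_id.const_mul_atTop hb))
    rw [tendsto_atBot]
    intro c
    filter_upwards [h4.eventually_ge_atTop (-c)] with x hx
    nlinarith
  have h2 : Tendsto (fun x : ℝ => Real.exp (x - b * x ^ 2)) atTop (nhds 0) :=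
    Real.tendsto_exp_atBot.comp h3
  have h := h1.mul h2
  rw [mul_zero] at h
  refine h.congr fun x => ?_
  have e : Real.exp (x - b * x ^ 2) = Real.exp x * Real.exp (-b * x ^ 2) := by
    rw [← Real.exp_add]; ring_nf
  rw [e, div_mul_eq_mul_div]
  field_simp

lemma tendsto_pg_atBot (p : ℝ[X]) {b : ℝ} (hb : 0 < b) :
    Tendsto (fun x => p.eval x * Real.exp (-b * x ^ 2)) atBot (nhds 0) := by
  have h := (tendsto_pg_atTop (p.comp (-X)) hb).comp tendsto_neg_atBot_atTop
  refine h.congr fun x => ?_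
  simp [Function.comp, eval_comp, neg_sq]

lemma exists_pg_bound (f : ℝ → ℝ) (hc : Continuous f)
    (h0 : Tendsto f atBot (nhds 0)) (h1 : Tendsto f atTop (nhds 0)) :
    ∃ C : ℝ, ∀ x, |f x| ≤ C := by
  have ht : Tendsto f (Filter.cocompact ℝ) (nhds 0) := by
    rw [cocompact_eq_atBot_atTop, tendsto_sup]
    exact ⟨h0, h1⟩
  have hmem : {x : ℝ | f x ∈ Metric.ball (0:ℝ) 1} ∈ Filter.cocompact ℝ :=
    ht (Metric.ball_mem_nhds 0 one_pos)
  obtain ⟨K, hK, hKs⟩ := (Filter.hasBasis_cocompact.mem_iff).1 hmem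
  obtain ⟨C, hC⟩ := hK.exists_bound_of_continuousOn hc.continuousOn
  refine ⟨max C 1, fun x => ?_⟩
  by_cases hx : x ∈ K
  · exact le_trans (by simpa using hC x hx) (le_max_left _ _)
  · have := hKs hx
    simp only [Set.mem_setOf_eq, Metric.mem_ball, dist_zero_right, Real.norm_eq_abs] at this
    exact le_trans this.le (le_max_right _ _)

lemma integrable_pg (p : ℝ[X]) :
    Integrable fun x : ℝ => p.eval x * Real.exp (-x ^ 2 / 2) := by
  have hexp : Continuous fun x : ℝ => Real.exp (-(1/4 : ℝ) * x ^ 2) :=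
    Real.continuous_exp.comp (continuous_const.mul (continuous_pow 2))
  have hc : Continuous fun x : ℝ => p.eval x * Real.exp (-(1/4 : ℝ) * x ^ 2) :=
    p.continuous.mul hexp
  obtain ⟨C, hC⟩ := exists_pg_bound _ hc (tendsto_pg_atBot p (by norm_num))
    (tendsto_pg_atTop p (by norm_num))
  refine Integrable.mono' ((integrable_exp_neg_mul_sq (by norm_num : (0:ℝ) < 1/4)).const_mul C)
    ?_ (Filter.Eventually.of_forall fun x => ?_)
  · exact (p.continuous.mul (Real.continuous_exp.comp
      ((continuous_pow 2).neg.div_const 2))).aestronglyMeasurable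
  · have e : Real.exp (-x ^ 2 / 2) =
        Real.exp (-(1/4 : ℝ) * x ^ 2) * Real.exp (-(1/4 : ℝ) * x ^ 2) := by
      rw [← Real.exp_add]; ring_nf
    rw [Real.norm_eq_abs, e, ← mul_assoc, abs_mul]
    rw [abs_of_pos (Real.exp_pos _)]
    exact mul_le_mul_of_nonneg_right (hC x) (Real.exp_pos _).le

noncomputable def LG (p : ℝ[X]) : ℝ :=
  ∫ t : ℝ, p.eval t * (Real.exp (-t ^ 2 / 2) / Real.sqrt (2 * Real.pi))

lemma integrable_pgw (p : ℝ[X]) :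
    Integrable fun t : ℝ => p.eval t * (Real.exp (-t ^ 2 / 2) / Real.sqrt (2 * Real.pi)) := by
  have h := (integrable_pg p).div_const (Real.sqrt (2 * Real.pi))
  refine h.congr (Filter.Eventually.of_forall fun x => ?_)
  simp [mul_div_assoc]

lemma LG_add (p q : ℝ[X]) : LG (p + q) = LG p + LG q := by
  unfold LG
  rw [← integral_add (integrable_pgw p) (integrable_pgw q)]
  congr 1; funext t; rw [eval_add]; ring

lemma LG_Cmul (c : ℝ) (p : ℝ[X]) : LG (C c * p) = c * LG p := by
  unfold LG
  rw [← integral_const_mul]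
  congr 1; funext t; rw [eval_mul, eval_C]; ring

lemma LG_zero : LG 0 = 0 := by
  unfold LG; simp

lemma LG_sub (p q : ℝ[X]) : LG (p - q) = LG p - LG q := by
  have h := LG_add (p - q) q
  rw [sub_add_cancel] at h
  linarith

lemma LG_one : LG 1 = 1 := by
  unfold LG
  have h : ∫ t : ℝ, Real.exp (-t ^ 2 / 2) = Real.sqrt (2 * Real.pi) := by
    have := integral_gaussian (1/2)
    have e2 : (Real.pi / (1/2)) = 2 * Real.pi := by ring
    rw [e2] at this
    rw [← this]
    congr 1; funext x; congr 1; ring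
  simp only [eval_one, one_mul]
  rw [integral_div, h, div_self]
  positivity

lemma LG_deriv (P : ℝ[X]) : LG (derivative P - X * P) = 0 := by
  unfold LG
  simp only [← mul_div_assoc]
  apply integral_eq_zero_of_hasDerivAt_of_integrable
    (f := fun t => P.eval t * Real.exp (-t ^ 2 / 2) / Real.sqrt (2 * Real.pi))
  · intro x
    have hp := P.hasDerivAt x
    have hin : HasDerivAt (fun t : ℝ => -t ^ 2 / 2) (-x) x := by
      have := ((hasDerivAt_pow 2 x).neg).div_const 2
      simpa using this.congr_deriv (by ring)
    have hg : HasDerivAt (fun t : ℝ => Real.exp (-t ^ 2 / 2)) (-x * Real.exp (-x ^ 2 / 2)) x := by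
      simpa [mul_comm] using hin.exp
    have h := (hp.mul hg).div_const (Real.sqrt (2 * Real.pi))
    refine h.congr_deriv ?_
    rw [eval_sub, eval_mul, eval_X]
    field_simp
    ring
  · have := integrable_pgw (derivative P - X * P)
    refine this.congr (Filter.Eventually.of_forall fun x => ?_)
    simp [mul_div_assoc]
  · have := integrable_pgw P
    refine this.congr (Filter.Eventually.of_forall fun x => ?_)
    simp [mul_div_assoc]

lemma deriv_hermite_int (n : ℕ) :
    derivative (hermite (n + 1)) = C ((n : ℤ) + 1) * hermite n := by
  induction n with
  | zero => simp [hermite_one, hermite_zero]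
  | succ n ih =>
    rw [hermite_succ (n + 1), derivative_sub, derivative_mul, derivative_X, one_mul, ih,
      derivative_mul, derivative_C, zero_mul, hermite_succ n]
    simp only [Nat.cast_succ, map_add, C_1]
    ring

noncomputable def Hr (n : ℕ) : ℝ[X] := (hermite n).map (Int.castRingHom ℝ)

lemma aeval_hermite_eq (x : ℝ) (n : ℕ) : aeval x (hermite n) = (Hr n).eval x := by
  rw [aeval_def, eval₂_eq_eval_map]; rfl

lemma Hr_monic (n : ℕ) : (Hr n).Monic :=
  (hermite_monic n).map _

lemma Hr_natDegree (n : ℕ) : (Hr n).natDegree = n := by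
  rw [Hr, Monic.natDegree_map (hermite_monic n), natDegree_hermite]

lemma Hr_ne_zero (n : ℕ) : Hr n ≠ 0 := (Hr_monic n).ne_zero

lemma Hr_zero : Hr 0 = 1 := by
  rw [Hr, hermite_zero, map_C]; simp

lemma Hr_succ (n : ℕ) : Hr (n + 1) = X * Hr n - derivative (Hr n) := by
  rw [Hr, hermite_succ, Polynomial.map_sub, Polynomial.map_mul, map_X, ← derivative_map]; rfl

lemma deriv_Hr (n : ℕ) :
    derivative (Hr (n + 1)) = C ((n : ℝ) + 1) * Hr n := by
  rw [Hr, derivative_map, deriv_hermite_int, Polynomial.map_mul, map_C]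
  norm_num
  left
  rfl

lemma LG_step (q : ℝ[X]) (k : ℕ) : LG (q * Hr (k + 1)) = LG (derivative q * Hr k) := by
  have h := LG_deriv (q * Hr k)
  have e : q * Hr (k + 1) =
      derivative q * Hr k - (derivative (q * Hr k) - X * (q * Hr k)) := by
    rw [Hr_succ, derivative_mul]; ring
  rw [e, LG_sub, h, sub_zero]

lemma LG_mul_hermite (n : ℕ) : ∀ q : ℝ[X], LG (q * Hr n) = LG (derivative^[n] q) := by
  induction n with
  | zero => intro q; rw [Hr_zero, mul_one]; rfl
  | succ n ih =>
    intro q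
    rw [LG_step, ih, Function.iterate_succ_apply]

lemma LG_orth (q : ℝ[X]) (n : ℕ) (h : q.natDegree < n) : LG (q * Hr n) = 0 := by
  rw [LG_mul_hermite, iterate_derivative_eq_zero h, LG_zero]

lemma LG_top (q : ℝ[X]) (m : ℕ) (h : q.natDegree ≤ m) :
    LG (q * Hr m) = m.factorial * q.coeff m := by
  rw [LG_mul_hermite]
  have hd : derivative^[m] q = C ((m.factorial : ℝ) * q.coeff m) := by
    have h1 : (derivative^[m] q).natDegree ≤ 0 := by
      refine le_trans (natDegree_iterate_derivative q m) ?_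
      omega
    rw [Polynomial.eq_C_of_natDegree_le_zero h1, coeff_iterate_derivative]
    simp [Nat.descFactorial_self, nsmul_eq_mul]
  rw [hd, ← mul_one (C _), LG_Cmul, LG_one, mul_one]

lemma LG_pos (p : ℝ[X]) (hp : p ≠ 0) (hpos : ∀ x, 0 ≤ p.eval x) : 0 < LG p := by
  unfold LG
  have hnn : 0 ≤ fun t : ℝ => p.eval t * (Real.exp (-t ^ 2 / 2) / Real.sqrt (2 * Real.pi)) :=
    fun t => by have := hpos t; positivity
  rw [integral_pos_iff_support_of_nonneg hnn (integrable_pgw p)]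
  · have hsub : {x : ℝ | p.IsRoot x}ᶜ ⊆
        Function.support fun t : ℝ =>
          p.eval t * (Real.exp (-t ^ 2 / 2) / Real.sqrt (2 * Real.pi)) := by
      intro x hx
      have h1 : p.eval x ≠ 0 := hx
      have h2 : Real.exp (-x ^ 2 / 2) / Real.sqrt (2 * Real.pi) > 0 := by positivity
      exact mul_ne_zero h1 (ne_of_gt h2)
    have hfin : volume {x : ℝ | p.IsRoot x} = 0 :=
      (Polynomial.finite_setOf_isRoot hp).measure_zero volume
    have huniv : (volume (Set.univ : Set ℝ)) = ⊤ := Real.volume_univ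
    have hle : volume (Set.univ : Set ℝ) ≤
        volume ({x : ℝ | p.IsRoot x}ᶜ) + volume {x : ℝ | p.IsRoot x} := by
      rw [← Set.compl_union_self {x : ℝ | p.IsRoot x}]
      exact measure_union_le _ _
    rw [huniv, hfin, add_zero] at hle
    have hc : volume ({x : ℝ | p.IsRoot x}ᶜ) = ⊤ := top_le_iff.mp hle
    calc (0 : ENNReal) < ⊤ := by simp
    _ = volume ({x : ℝ | p.IsRoot x}ᶜ) := hc.symm
    _ ≤ _ := measure_mono hsub

lemma monic_no_roots_pos {q : ℝ[X]} (hq : q.Monic) (h0 : q.roots = 0) (x : ℝ) :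
    0 < q.eval x := by
  have hne : q ≠ 0 := hq.ne_zero
  have hnoroot : ∀ y : ℝ, q.eval y ≠ 0 := by
    intro y hy
    have : y ∈ q.roots := by rw [mem_roots']; exact ⟨hne, hy⟩
    rw [h0] at this
    simp at this
  rcases eq_or_lt_of_le (Nat.zero_le q.natDegree) with hdeg | hdeg
  · have : q = 1 := (hq.natDegree_eq_zero).mp hdeg.symm
    rw [this]; simp
  · have hdeg' : 0 < q.degree := by
      rwa [← natDegree_pos_iff_degree_pos]
    have htop := q.tendsto_atTop_of_leadingCoeff_nonneg hdeg' (by rw [hq.leadingCoeff]; norm_num)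
    obtain ⟨x0, hx0⟩ := (htop.eventually_ge_atTop 1).exists
    by_contra hcon
    push_neg at hcon
    have hlt : q.eval x < 0 := lt_of_le_of_ne hcon (hnoroot x)
    have h0mem : (0 : ℝ) ∈ Set.uIcc (q.eval x) (q.eval x0) :=
      Set.mem_uIcc.mpr (Or.inl ⟨hlt.le, by linarith⟩)
    obtain ⟨y, _, hy⟩ := intermediate_value_uIcc (Continuous.continuousOn q.continuous) h0mem
    exact hnoroot y hy

lemma hermite_real_roots (n : ℕ) (hn : 1 ≤ n) :
    ∃ x : Fin n → ℝ, StrictMono x ∧ (∀ i, (Hr n).eval (x i) = 0) ∧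
      (∀ y, (Hr n).eval y = 0 → ∃ i, y = x i) := by
  classical
  set P := Hr n with hP
  have hPmonic : P.Monic := Hr_monic n
  have hPdeg : P.natDegree = n := Hr_natDegree n
  have hPne : P ≠ 0 := hPmonic.ne_zero
  obtain ⟨q, hfac, hcard, hq0⟩ := P.exists_prod_multiset_X_sub_C_mul
  have hqmonic : q.Monic := by
    refine Monic.of_mul_monic_left
      (monic_multiset_prod_of_monic P.roots (fun a => X - C a) fun a _ => monic_X_sub_C a) ?_
    rw [hfac]; exact hPmonic
  have hqpos : ∀ x, 0 < q.eval x := monic_no_roots_pos hqmonic hq0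
  set R := P.roots with hR
  set T := R.toFinset.filter (fun a => Odd (R.count a)) with hT
  set w : ℝ[X] := ∏ a ∈ T, (X - C a) with hw
  have hwmonic : w.Monic := monic_prod_of_monic _ _ fun a _ => monic_X_sub_C a
  have hwdeg : w.natDegree = T.card := by
    rw [hw, natDegree_prod_of_monic _ _ fun a _ => monic_X_sub_C a]
    simp [natDegree_X_sub_C]
  -- sign of (P * w)
  have hsign : ∀ x, 0 ≤ (P * w).eval x := by
    intro x
    have hprod : ((R.map fun a => X - C a).prod).eval x =
        ∏ a ∈ R.toFinset, (x - a) ^ R.count a := by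
      rw [Finset.prod_multiset_map_count]
      rw [eval_prod]
      congr 1; funext a
      rw [eval_pow, eval_sub, eval_X, eval_C]
    have hweval : w.eval x = ∏ a ∈ R.toFinset, (x - a) ^ (if Odd (R.count a) then 1 else 0) := by
      rw [hw, eval_prod, hT, Finset.prod_filter]
      congr 1; funext a
      split <;> simp
    have hPeval : P.eval x = (∏ a ∈ R.toFinset, (x - a) ^ R.count a) * q.eval x := by
      rw [← hfac, eval_mul, hprod]
    rw [eval_mul, hPeval, hweval]
    have := hqpos x
    have hprod2 : (∏ a ∈ R.toFinset, (x - a) ^ R.count a) *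
        (∏ a ∈ R.toFinset, (x - a) ^ (if Odd (R.count a) then 1 else 0)) =
        ∏ a ∈ R.toFinset, (x - a) ^ (R.count a + if Odd (R.count a) then 1 else 0) := by
      rw [← Finset.prod_mul_distrib]
      congr 1; funext a
      rw [← pow_add]
    have hnn : 0 ≤ ∏ a ∈ R.toFinset, (x - a) ^ (R.count a + if Odd (R.count a) then 1 else 0) := by
      apply Finset.prod_nonneg
      intro a _
      apply Even.pow_nonneg
      rcases Nat.even_or_odd (R.count a) with he | ho
      · rw [if_neg (by simpa using he)]; simpa using he
      · rw [if_pos ho]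
        exact ho.add_one
    calc (0:ℝ) ≤ (∏ a ∈ R.toFinset, (x - a) ^ (R.count a + if Odd (R.count a) then 1 else 0)) *
        q.eval x := mul_nonneg hnn (hqpos x).le
    _ = _ := by rw [← hprod2]; ring
  -- T.card = n
  have hR_le : Multiset.card R ≤ n := by rw [← hPdeg]; exact P.card_roots'
  have hTF_le : R.toFinset.card ≤ Multiset.card R := R.toFinset_card_le
  have hT_le : T.card ≤ R.toFinset.card := Finset.card_filter_le _ _
  have hT_ge : n ≤ T.card := by
    by_contra hcon
    push_neg at hcon
    have horth : LG (P * w) = 0 := by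
      rw [mul_comm]
      exact LG_orth _ _ (by rw [hwdeg]; omega)
    have hpos := LG_pos (P * w) (mul_ne_zero hPne hwmonic.ne_zero) hsign
    linarith
  have hTFcard : R.toFinset.card = n := le_antisymm (le_trans hTF_le hR_le) (le_trans hT_ge hT_le)
  -- enumerate
  let iso := R.toFinset.orderIsoOfFin hTFcard
  refine ⟨fun i => (iso i : ℝ), ?_, ?_, ?_⟩
  · intro a b hab
    exact Subtype.coe_lt_coe.mpr (iso.strictMono hab)
  · intro i
    have hmem : (iso i : ℝ) ∈ R := Multiset.mem_toFinset.mp (iso i).2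
    exact (mem_roots'.mp hmem).2
  · intro y hy
    have hmem : y ∈ R.toFinset := Multiset.mem_toFinset.mpr (mem_roots'.mpr ⟨hPne, hy⟩)
    exact ⟨iso.symm ⟨y, hmem⟩, by simp⟩

lemma LG_sum {ι : Type*} (s : Finset ι) (f : ι → ℝ[X]) :
    LG (∑ i ∈ s, f i) = ∑ i ∈ s, LG (f i) := by
  classical
  induction s using Finset.induction with
  | empty => simpa using LG_zero
  | insert _ _ hni ih =>
    rw [Finset.sum_insert hni, Finset.sum_insert hni, LG_add, ih]

lemma quad_exact (n : ℕ) (hn : 1 ≤ n) (x : Fin n → ℝ) (hsm : StrictMono x)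
    (hroot : ∀ i, (Hr n).eval (x i) = 0) (p : ℝ[X]) (hdeg : p.natDegree ≤ 2 * n - 1) :
    LG p = ∑ i, LG (Lagrange.basis Finset.univ x i) * p.eval (x i) := by
  classical
  have hinj : Set.InjOn x ↑(Finset.univ : Finset (Fin n)) := fun a _ b _ h => hsm.injective h
  have low : ∀ r : ℝ[X], r.degree < (n : WithBot ℕ) →
      LG r = ∑ i, LG (Lagrange.basis Finset.univ x i) * r.eval (x i) := by
    intro r hr
    have hcard : ((Finset.univ : Finset (Fin n)).card : WithBot ℕ) = (n : WithBot ℕ) := by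
      rw [Finset.card_univ, Fintype.card_fin]
    have hil := Lagrange.eq_interpolate hinj (f := r) (by rw [hcard]; exact hr)
    calc LG r = LG (Lagrange.interpolate Finset.univ x fun i => r.eval (x i)) := by rw [← hil]
    _ = ∑ i, LG (C (r.eval (x i)) * Lagrange.basis Finset.univ x i) := by
        rw [Lagrange.interpolate_apply, LG_sum]
    _ = ∑ i, LG (Lagrange.basis Finset.univ x i) * r.eval (x i) := by
        congr 1; funext i; rw [LG_Cmul]; ring
  set d := p /ₘ Hr n with hd
  set r := p %ₘ Hr n with hrr
  have hsplit : r + Hr n * d = p := modByMonic_add_div p (Hr n)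
  have hddeg : d.natDegree < n := by
    rw [hd, natDegree_divByMonic p (Hr_monic n), Hr_natDegree]
    omega
  have hrdeg : r.degree < (n : WithBot ℕ) := by
    have := degree_modByMonic_lt p (Hr_monic n)
    rwa [degree_eq_natDegree (Hr_ne_zero n), Hr_natDegree] at this
  have horth : LG (Hr n * d) = 0 := by
    rw [mul_comm]; exact LG_orth _ _ hddeg
  have heval : ∀ i, r.eval (x i) = p.eval (x i) := by
    intro i
    rw [← hsplit, eval_add, eval_mul, hroot i, zero_mul, add_zero]
  calc LG p = LG (r + Hr n * d) := by rw [hsplit]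
  _ = LG r + LG (Hr n * d) := LG_add _ _
  _ = LG r := by rw [horth, add_zero]
  _ = ∑ i, LG (Lagrange.basis Finset.univ x i) * r.eval (x i) := low r hrdeg
  _ = _ := by congr 1; funext i; rw [heval]

lemma weight_formula (m : ℕ) (x : Fin (m + 1) → ℝ) (hsm : StrictMono x)
    (hroot : ∀ i, (Hr (m + 1)).eval (x i) = 0) (i : Fin (m + 1)) :
    LG (Lagrange.basis Finset.univ x i) =
      (m.factorial : ℝ) / (((m : ℝ) + 1) * ((Hr m).eval (x i)) ^ 2) := by
  classical
  set g := Hr (m + 1) /ₘ (X - C (x i)) with hg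
  have hfac : (X - C (x i)) * g = Hr (m + 1) := mul_divByMonic_eq_iff_isRoot.mpr (hroot i)
  have hgmonic : g.Monic :=
    Monic.of_mul_monic_left (monic_X_sub_C (x i)) (by rw [hfac]; exact Hr_monic (m + 1))
  have hgdeg : g.natDegree = m := by
    rw [hg, natDegree_divByMonic _ (monic_X_sub_C (x i)), Hr_natDegree, natDegree_X_sub_C]
    omega
  have hA : LG (g * Hr m) = (m.factorial : ℝ) := by
    rw [LG_top g m (le_of_eq hgdeg), ← hgdeg]
    rw [hgmonic.coeff_natDegree, mul_one]
  have hB := quad_exact (m + 1) (by omega) x hsm hroot (g * Hr m)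
    (by rw [natDegree_mul hgmonic.ne_zero (Hr_ne_zero m), hgdeg, Hr_natDegree]; omega)
  have hgj : ∀ j, j ≠ i → g.eval (x j) = 0 := by
    intro j hj
    have h1 := congrArg (eval (x j)) hfac
    rw [eval_mul, eval_sub, eval_X, eval_C, hroot j] at h1
    rcases mul_eq_zero.mp h1 with h2 | h2
    · exact absurd (by linarith : x j = x i) (fun hh => hj (hsm.injective hh))
    · exact h2
  have hsum : (∑ j, LG (Lagrange.basis Finset.univ x j) * (g * Hr m).eval (x j)) =
      LG (Lagrange.basis Finset.univ x i) * (g.eval (x i) * (Hr m).eval (x i)) := by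
    rw [Finset.sum_eq_single_of_mem i (Finset.mem_univ i)]
    · rw [eval_mul]
    · intro j _ hj
      rw [eval_mul, hgj j hj, zero_mul, mul_zero]
  have hgi : g.eval (x i) = ((m : ℝ) + 1) * (Hr m).eval (x i) := by
    have hder := congrArg derivative hfac
    rw [derivative_mul, derivative_sub, derivative_X, derivative_C, sub_zero, one_mul,
      deriv_Hr m] at hder
    have h2 := congrArg (eval (x i)) hder
    rw [eval_add, eval_mul, eval_sub, eval_X, eval_C, sub_self, zero_mul, add_zero,
      eval_mul, eval_C] at h2
    exact h2
  set W := LG (Lagrange.basis Finset.univ x i) with hW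
  set h := (Hr m).eval (x i) with hh
  have hkey : (m.factorial : ℝ) = W * (((m : ℝ) + 1) * h ^ 2) := by
    rw [← hA, hB, hsum, hgi]; ring
  have hK : ((m : ℝ) + 1) * h ^ 2 ≠ 0 := by
    intro h0
    rw [h0, mul_zero] at hkey
    exact (Nat.cast_ne_zero.mpr m.factorial_ne_zero) hkey
  rw [eq_div_iff hK]
  linarith [hkey]

theorem gaussHermite_quadrature_exact (n : ℕ) (hn : 1 ≤ n) :
    ∃ x : Fin n → ℝ, StrictMono x ∧
      (∀ i, aeval (x i) (Polynomial.hermite n) = (0 : ℝ)) ∧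
      (∀ y : ℝ, aeval y (Polynomial.hermite n) = (0 : ℝ) → ∃ i, y = x i) ∧
      (∀ p : Polynomial ℝ, p.natDegree ≤ 2 * n - 1 →
        ∫ t : ℝ, p.eval t * (Real.exp (-t ^ 2 / 2) / Real.sqrt (2 * Real.pi)) =
          ∑ i, ((n - 1).factorial : ℝ) /
              ((n : ℝ) * (aeval (x i) (Polynomial.hermite (n - 1))) ^ 2) *
            p.eval (x i)) := by
  obtain ⟨m, rfl⟩ : ∃ m, n = m + 1 := ⟨n - 1, by omega⟩
  obtain ⟨x, hsm, hroot, hcompl⟩ := hermite_real_roots (m + 1) (by omega)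
  refine ⟨x, hsm, ?_, ?_, ?_⟩
  · intro i
    rw [aeval_hermite_eq]
    exact hroot i
  · intro y hy
    apply hcompl
    rw [← aeval_hermite_eq]
    exact hy
  · intro p hp
    have h1 := quad_exact (m + 1) (by omega) x hsm hroot p hp
    have h2 : (∫ t : ℝ, p.eval t * (Real.exp (-t ^ 2 / 2) / Real.sqrt (2 * Real.pi))) = LG p := rfl
    rw [h2, h1]
    congr 1
    funext i
    rw [weight_formula m x hsm hroot i]
    have e1 : (m + 1 - 1) = m := by omega
    rw [e1, aeval_hermite_eq]
    push_cast
    ring
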